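/- Let g, h : A* → Σ* be binary morphisms such that exactly one of g and h is periodic. Then E(g,h) = α* = {αⁿ : n ≥ 0} for some word α ∈ A*. -/

import Mathlib

/-- The two-letter alphabet `A = {a, b}`. -/
inductive Ltr : Type
  | a : Ltr
  | b : Ltr
  deriving DecidableEq

/-- Apply a morphism (given by the images of the letters) to a word. -/
def mapp {α σ : Type*} (g : α → List σ) (w : List α) : List σ :=
  (w.map g).flatten

/-- The `n`-th power `tⁿ` of a word `t`. -/
def npow {σ : Type*} (t : List σ) (n : ℕ) : List σ :=
  (List.replicate n t).flatten

/-- A binary morphism is periodic if all images of letters are powers of a common word. -/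
def Periodic {σ : Type*} (g : Ltr → List σ) : Prop :=
  ∃ t : List σ, ∀ x : Ltr, ∃ n : ℕ, g x = npow t n

/-- The equality set `E(g,h)`. -/
def EqSet {σ : Type*} (g h : Ltr → List σ) : Set (List Ltr) :=
  {u | mapp g u = mapp h u}

/-- `u` is a minimal element of `E(g,h)`: nonempty, in `E(g,h)`, and not a product of two
nonempty elements of `E(g,h)`. -/
def MinEl {σ : Type*} (g h : Ltr → List σ) (u : List Ltr) : Prop :=
  u ≠ [] ∧ u ∈ EqSet g h ∧
    ∀ v w : List Ltr, v ≠ [] → w ≠ [] → v ∈ EqSet g h → w ∈ EqSet g h → u ≠ v ++ w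

/-- The submonoid of the free monoid generated by a set `S` of words. -/
def gen {α : Type*} (S : Set (List α)) : Set (List α) :=
  {u | ∃ l : List (List α), (∀ v ∈ l, v ∈ S) ∧ u = l.flatten}

/-- A binary morphism is marked if the images of the two letters are nonempty and
begin with different letters. -/
def Marked {σ : Type*} (g : Ltr → List σ) : Prop :=
  g Ltr.a ≠ [] ∧ g Ltr.b ≠ [] ∧ (g Ltr.a).head? ≠ (g Ltr.b).head?

open Classical in
/-- Longest common prefix of two words. -/
noncomputable def lcp {σ : Type*} : List σ → List σ → List σ
  | x :: xs, y :: ys => if x = y then x :: lcp xs ys else []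
  | _, _ => []

/-- `z_h`: the longest common prefix of `h(ab)` and `h(ba)`. -/
noncomputable def zh {σ : Type*} (h : Ltr → List σ) : List σ :=
  lcp (h Ltr.a ++ h Ltr.b) (h Ltr.b ++ h Ltr.a)

/-- `z̄_h`: the longest common suffix of `h(ab)` and `h(ba)`. -/
noncomputable def zbar {σ : Type*} (h : Ltr → List σ) : List σ :=
  (lcp (h Ltr.a ++ h Ltr.b).reverse ((h Ltr.b ++ h Ltr.a).reverse)).reverse

/-- Componentwise concatenation in `Δ* × Δ*`. -/
def pprod {α : Type*} (p q : List α × List α) : List α × List α :=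
  (p.1 ++ q.1, p.2 ++ q.2)

/-- The coincidence set `I(g,h) = {(u,v) | g(u) = h(v)}`. -/
def CoinSet {α σ : Type*} (g h : α → List σ) : Set (List α × List α) :=
  {p | mapp g p.1 = mapp h p.2}

/-- Minimal elements of the coincidence set: elements other than `(ε,ε)` that are not
a product of two elements of `I(g,h) \ {(ε,ε)}`. -/
def MinCoin {α σ : Type*} (g h : α → List σ) (p : List α × List α) : Prop :=
  p ≠ ([], []) ∧ p ∈ CoinSet g h ∧
    ¬ ∃ q r : List α × List α, q ≠ ([], []) ∧ r ≠ ([], []) ∧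
      q ∈ CoinSet g h ∧ r ∈ CoinSet g h ∧ p = pprod q r

/-- `(e,f)` is a block of `(g,h)`: nonempty words with `z_h·g(e) = h(f)·z_h`, minimal
with this property. -/
def MinBlock {σ : Type*} (g h : Ltr → List σ) (e f : List Ltr) : Prop :=
  e ≠ [] ∧ f ≠ [] ∧ zh h ++ mapp g e = mapp h f ++ zh h ∧
    ∀ u v : List Ltr, u <+: e → v <+: f →
      zh h ++ mapp g u = mapp h v ++ zh h → (u = [] ∧ v = []) ∨ (u = e ∧ v = f)

/-- `e` is a nonempty word with `z_h·g(e) = h(e)·z_h`, minimal with this property. -/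
def MinEqBlock {σ : Type*} (g h : Ltr → List σ) (e : List Ltr) : Prop :=
  e ≠ [] ∧ zh h ++ mapp g e = mapp h e ++ zh h ∧
    ∀ e₁ : List Ltr, e₁ <+: e → zh h ++ mapp g e₁ = mapp h e₁ ++ zh h →
      e₁ = [] ∨ e₁ = e

/-- The binary morphism sending `a ↦ x` and `b ↦ y`. -/
def two {σ : Type*} (x y : List σ) : Ltr → List σ
  | Ltr.a => x
  | Ltr.b => y

/-- A counterexample: the minimal generating set of `E(g,h)` has at least two elements,
`g` is marked, `h` is not marked, `|g(a)| > |h(a)|` and `|g(b)| < |h(b)|`. -/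
def Counterexample {σ : Type*} (g h : Ltr → List σ) : Prop :=
  (∃ α β : List Ltr, MinEl g h α ∧ MinEl g h β ∧ α ≠ β) ∧
  Marked g ∧ ¬ Marked h ∧
  (h Ltr.a).length < (g Ltr.a).length ∧ (g Ltr.b).length < (h Ltr.b).length


section StmtThreeAux

variable {σ : Type*}

theorem npow_zero' (t : List σ) : npow t 0 = [] := rfl

theorem npow_succ' (t : List σ) (n : ℕ) : npow t (n + 1) = t ++ npow t n := by
  unfold npow
  rw [List.replicate_succ, List.flatten_cons]

theorem npow_add' (t : List σ) (m n : ℕ) : npow t (m + n) = npow t m ++ npow t n := by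
  unfold npow
  rw [List.replicate_add, List.flatten_append]

theorem npow_nil' (n : ℕ) : npow ([] : List σ) n = [] := by
  induction n with
  | zero => rfl
  | succ n ih => rw [npow_succ', ih]; rfl

theorem mapp_nil' {α : Type*} (g : α → List σ) : mapp g [] = [] := rfl

theorem mapp_cons' {α : Type*} (g : α → List σ) (c : α) (u : List α) :
    mapp g (c :: u) = g c ++ mapp g u := by
  simp [mapp]

theorem mapp_append' {α : Type*} (g : α → List σ) (u v : List α) :
    mapp g (u ++ v) = mapp g u ++ mapp g v := by
  simp [mapp]

/-- Commuting words are powers of a common word. -/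
theorem comm_pow_aux :
    ∀ (N : ℕ) (x y : List σ), x.length + y.length ≤ N → x ++ y = y ++ x →
      ∃ t m n, x = npow t m ∧ y = npow t n := by
  intro N
  induction N with
  | zero =>
    intro x y hlen _
    have hx : x = [] := List.length_eq_zero_iff.mp (by omega)
    have hy : y = [] := List.length_eq_zero_iff.mp (by omega)
    exact ⟨[], 0, 0, by simp [hx, npow_zero'], by simp [hy, npow_zero']⟩
  | succ N ih =>
    intro x y hlen hc
    rcases le_total x.length y.length with hle | hle
    · rcases eq_or_ne x [] with rfl | hx
      · exact ⟨y, 0, 1, rfl, by rw [npow_succ', npow_zero', List.append_nil]⟩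
      · have hxy : x <+: y := by
          refine List.prefix_of_prefix_length_le ?_ (List.prefix_append y x) hle
          rw [← hc]; exact List.prefix_append x y
        obtain ⟨z, rfl⟩ := hxy
        have hc' : x ++ z = z ++ x := by
          have : x ++ (x ++ z) = x ++ (z ++ x) := by
            rw [hc]; simp [List.append_assoc]
          exact List.append_cancel_left this
        have hxpos : 0 < x.length := List.length_pos_iff.mpr hx
        have hlen' : x.length + z.length ≤ N := by
          simp only [List.length_append] at hlen; omega
        obtain ⟨t, m, n, hxt, hzt⟩ := ih x z hlen' hc'
        exact ⟨t, m, m + n, hxt, by rw [npow_add', hxt, hzt]⟩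
    · rcases eq_or_ne y [] with rfl | hy
      · exact ⟨x, 1, 0, by rw [npow_succ', npow_zero', List.append_nil], rfl⟩
      · have hyx : y <+: x := by
          refine List.prefix_of_prefix_length_le ?_ (List.prefix_append x y) hle
          rw [hc]; exact List.prefix_append y x
        obtain ⟨z, rfl⟩ := hyx
        have hc' : y ++ z = z ++ y := by
          have : y ++ (y ++ z) = y ++ (z ++ y) := by
            rw [← hc]; simp [List.append_assoc]
          exact List.append_cancel_left this
        have hypos : 0 < y.length := List.length_pos_iff.mpr hy
        have hlen' : y.length + z.length ≤ N := by
          simp only [List.length_append] at hlen; omega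
        obtain ⟨t, m, n, hyt, hzt⟩ := ih y z hlen' hc'
        exact ⟨t, m + n, m, by rw [npow_add', hyt, hzt], hyt⟩

theorem comm_pow (x y : List σ) (hc : x ++ y = y ++ x) :
    ∃ t m n, x = npow t m ∧ y = npow t n :=
  comm_pow_aux (x.length + y.length) x y le_rfl hc

/-- Expansion of factorizations over `{x, x++z}` into factorizations over `{x, z}`. -/
theorem expand_fact {x z : List σ} :
    ∀ (l : List (List σ)), (∀ s ∈ l, s = x ∨ s = x ++ z) →
      ∃ l', (∀ s ∈ l', s = x ∨ s = z) ∧ l'.flatten = l.flatten ∧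
        (l = [] ∨ ∃ l'', l' = x :: l'') := by
  intro l
  induction l with
  | nil => exact fun _ => ⟨[], by simp, rfl, Or.inl rfl⟩
  | cons s l ih =>
    intro hl
    obtain ⟨l', h1, h2, _⟩ := ih (fun s hs => hl s (List.mem_cons_of_mem _ hs))
    rcases hl s List.mem_cons_self with rfl | rfl
    · refine ⟨s :: l', ?_, by simp [h2], Or.inr ⟨l', rfl⟩⟩
      intro w hw
      rcases List.mem_cons.mp hw with rfl | hw
      · exact Or.inl rfl
      · exact h1 w hw
    · refine ⟨x :: z :: l', ?_, by simp [h2], Or.inr ⟨z :: l', rfl⟩⟩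
      intro w hw
      rcases List.mem_cons.mp hw with rfl | hw
      · exact Or.inl rfl
      · rcases List.mem_cons.mp hw with rfl | hw
        · exact Or.inr rfl
        · exact h1 w hw

/-- Key lemma: if a word lies in `x·{x,y}*` and in `y·{x,y}*`, then `x` and `y` commute. -/
theorem keyL :
    ∀ (N : ℕ) (x y : List σ) (l₁ l₂ : List (List σ)), x.length + y.length ≤ N →
      (∀ s ∈ l₁, s = x ∨ s = y) → (∀ s ∈ l₂, s = x ∨ s = y) →
      x ++ l₁.flatten = y ++ l₂.flatten → x ++ y = y ++ x := by
  intro N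
  induction N with
  | zero =>
    intro x y _ _ hlen _ _ _
    have hx : x = [] := List.length_eq_zero_iff.mp (by omega)
    have hy : y = [] := List.length_eq_zero_iff.mp (by omega)
    rw [hx, hy]
  | succ N ih =>
    have core : ∀ (x y : List σ) (l₁ l₂ : List (List σ)), x.length ≤ y.length →
        x.length + y.length ≤ N + 1 →
        (∀ s ∈ l₁, s = x ∨ s = y) → (∀ s ∈ l₂, s = x ∨ s = y) →
        x ++ l₁.flatten = y ++ l₂.flatten → x ++ y = y ++ x := by
      intro x y l₁ l₂ hle hlen h1 h2 heq
      rcases eq_or_ne x [] with rfl | hx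
      · simp
      · have p1 : x <+: y ++ l₂.flatten := heq ▸ List.prefix_append x l₁.flatten
        have hxy : x <+: y :=
          List.prefix_of_prefix_length_le p1 (List.prefix_append y l₂.flatten) hle
        obtain ⟨z, rfl⟩ := hxy
        rcases eq_or_ne z [] with rfl | hz
        · simp
        · have heq' : l₁.flatten = z ++ l₂.flatten := by
            have : x ++ l₁.flatten = x ++ (z ++ l₂.flatten) := by
              rw [heq]; simp [List.append_assoc]
            exact List.append_cancel_left this
          have hl1ne : l₁ ≠ [] := by
            intro h0
            rw [h0] at heq'
            simp only [List.flatten_nil] at heq'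
            exact hz (by
              have := congrArg List.length heq'
              simp at this
              exact List.length_eq_zero_iff.mp (by omega))
          obtain ⟨l₁', e1, e2, e3⟩ := expand_fact l₁ h1
          obtain ⟨l₂', f1, f2, _⟩ := expand_fact l₂ h2
          rcases e3 with h0 | ⟨l₁'', rfl⟩
          · exact absurd h0 hl1ne
          · have heq2 : x ++ l₁''.flatten = z ++ l₂'.flatten := by
              have : (x :: l₁'').flatten = z ++ l₂'.flatten := by
                rw [e2, heq', f2]
              simpa using this
            have hxpos : 0 < x.length := List.length_pos_iff.mpr hx
            have hlen2 : x.length + z.length ≤ N := by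
              simp only [List.length_append] at hlen; omega
            have hfact1 : ∀ s ∈ l₁'', s = x ∨ s = z := by
              intro s hs; exact e1 s (List.mem_cons_of_mem _ hs)
            have hcomm : x ++ z = z ++ x := ih x z l₁'' l₂' hlen2 hfact1 f1 heq2
            calc x ++ (x ++ z) = x ++ (z ++ x) := by rw [hcomm]
              _ = (x ++ z) ++ x := by rw [List.append_assoc]
    intro x y l₁ l₂ hlen h1 h2 heq
    rcases le_total x.length y.length with hle | hle
    · exact core x y l₁ l₂ hle hlen h1 h2 heq
    · exact (core y x l₂ l₁ hle (by omega) (fun s hs => (h2 s hs).symm)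
        (fun s hs => (h1 s hs).symm) heq.symm).symm

/-- A nonperiodic binary morphism is injective. -/
theorem mapp_inj (g : Ltr → List σ)
    (hne : g Ltr.a ++ g Ltr.b ≠ g Ltr.b ++ g Ltr.a) :
    ∀ u v : List Ltr, mapp g u = mapp g v → u = v := by
  have hga : g Ltr.a ≠ [] := by
    intro h0; exact hne (by rw [h0]; simp)
  have hgb : g Ltr.b ≠ [] := by
    intro h0; exact hne (by rw [h0]; simp)
  have hmem : ∀ (w : List Ltr) (s : List σ), s ∈ w.map g → s = g Ltr.a ∨ s = g Ltr.b := by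
    intro w s hs
    obtain ⟨c, _, rfl⟩ := List.mem_map.mp hs
    cases c
    · exact Or.inl rfl
    · exact Or.inr rfl
  have hne' : ∀ (c : Ltr), g c ≠ [] := by
    intro c; cases c
    · exact hga
    · exact hgb
  intro u
  induction u with
  | nil =>
    intro v h
    cases v with
    | nil => rfl
    | cons d v' =>
      exfalso
      rw [mapp_cons'] at h
      have : g d = [] := (List.append_eq_nil_iff.mp h.symm).1
      exact hne' d this
  | cons c u' ih =>
    intro v h
    cases v with
    | nil =>
      exfalso
      rw [mapp_cons'] at h
      have : g c = [] := (List.append_eq_nil_iff.mp h).1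
      exact hne' c this
    | cons d v' =>
      rw [mapp_cons', mapp_cons'] at h
      cases c <;> cases d
      · have := List.append_cancel_left h
        rw [ih v' this]
      · exact absurd (keyL ((g Ltr.a).length + (g Ltr.b).length) (g Ltr.a) (g Ltr.b)
          (u'.map g) (v'.map g) le_rfl (hmem u') (hmem v') h) hne
      · exact absurd (keyL ((g Ltr.b).length + (g Ltr.a).length) (g Ltr.b) (g Ltr.a)
          (u'.map g) (v'.map g) le_rfl (fun s hs => (hmem u' s hs).symm)
          (fun s hs => (hmem v' s hs).symm) h).symm hne
      · have := List.append_cancel_left h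
        rw [ih v' this]

theorem mapp_exp (h : Ltr → List σ) (t : List σ) (ht : ∀ x, ∃ n, h x = npow t n) :
    ∀ u : List Ltr, ∃ n, mapp h u = npow t n := by
  intro u
  induction u with
  | nil => exact ⟨0, rfl⟩
  | cons c u' ih =>
    obtain ⟨k, hk⟩ := ht c
    obtain ⟨n, hn⟩ := ih
    exact ⟨k + n, by rw [mapp_cons', hk, hn, npow_add']⟩

/-- Main one-sided version: `h` periodic, `g` not periodic. -/
theorem stmt_3_main (g h : Ltr → List σ) (hper : Periodic h) (hng : ¬ Periodic g) :
    ∃ α : List Ltr, EqSet g h = {u : List Ltr | ∃ n : ℕ, u = npow α n} := by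
  obtain ⟨t, ht⟩ := hper
  have hgne : g Ltr.a ++ g Ltr.b ≠ g Ltr.b ++ g Ltr.a := by
    intro hc
    obtain ⟨t', m, n, h1, h2⟩ := comm_pow _ _ hc
    exact hng ⟨t', fun x => by cases x
                               · exact ⟨m, h1⟩
                               · exact ⟨n, h2⟩⟩
  have ginj := mapp_inj g hgne
  have hexp := mapp_exp h t ht
  have hnilE : ([] : List Ltr) ∈ EqSet g h := rfl
  by_cases hE : ∀ u ∈ EqSet g h, u = []
  · refine ⟨[], ?_⟩
    ext u
    simp only [Set.mem_setOf_eq]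
    constructor
    · intro hu
      exact ⟨0, by rw [hE u hu, npow_zero']⟩
    · rintro ⟨n, rfl⟩
      rw [npow_nil']
      exact hnilE
  · push_neg at hE
    obtain ⟨u₀, hu₀E, hu₀ne⟩ := hE
    classical
    have hPex : ∃ n, ∃ u, u ∈ EqSet g h ∧ u ≠ [] ∧ u.length = n :=
      ⟨u₀.length, u₀, hu₀E, hu₀ne, rfl⟩
    obtain ⟨ρ, hρE, hρne, hρlen⟩ := Nat.find_spec hPex
    have hmin : ∀ v ∈ EqSet g h, v ≠ [] → ρ.length ≤ v.length := by
      intro v hv hvne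
      rw [hρlen]
      exact Nat.find_min' hPex ⟨v, hv, hvne, rfl⟩
    have hρpos : 0 < ρ.length := List.length_pos_iff.mpr hρne
    -- powers of ρ are in the equality set
    have hpow : ∀ n, npow ρ n ∈ EqSet g h := by
      intro n
      induction n with
      | zero => exact hnilE
      | succ n ih =>
        show mapp g (npow ρ (n+1)) = mapp h (npow ρ (n+1))
        rw [npow_succ', mapp_append', mapp_append', hρE, ih]
    -- every element of the equality set is a power of ρ
    have hsub : ∀ (N : ℕ) (u : List Ltr), u.length ≤ N → u ∈ EqSet g h →
        ∃ n, u = npow ρ n := by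
      intro N
      induction N with
      | zero =>
        intro u hlen _
        refine ⟨0, ?_⟩
        rw [npow_zero']
        exact List.length_eq_zero_iff.mp (Nat.le_zero.mp hlen)
      | succ N ih =>
        intro u hlen huE
        rcases eq_or_ne u [] with rfl | hune
        · exact ⟨0, by rw [npow_zero']⟩
        · have hlenρ : ρ.length ≤ u.length := hmin u huE hune
          -- u and ρ commute
          obtain ⟨nu, hnu⟩ := hexp u
          obtain ⟨nρ, hnρ⟩ := hexp ρ
          have hgu : mapp g u = npow t nu := by rw [huE]; exact hnu
          have hgρ : mapp g ρ = npow t nρ := by rw [hρE]; exact hnρ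
          have hcomm : u ++ ρ = ρ ++ u := by
            apply ginj
            rw [mapp_append', mapp_append', hgu, hgρ, ← npow_add', ← npow_add',
              Nat.add_comm]
          have hpre : ρ <+: u := by
            refine List.prefix_of_prefix_length_le ?_ (List.prefix_append u ρ) hlenρ
            rw [hcomm]
            exact List.prefix_append ρ u
          obtain ⟨w, rfl⟩ := hpre
          have hwE : w ∈ EqSet g h := by
            have : mapp g ρ ++ mapp g w = mapp g ρ ++ mapp h w := by
              have h1 : mapp g (ρ ++ w) = mapp h (ρ ++ w) := huE
              rw [mapp_append', mapp_append'] at h1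
              rw [h1, hρE]
            exact List.append_cancel_left this
          have hwlen : w.length ≤ N := by
            simp only [List.length_append] at hlen
            omega
          obtain ⟨n, rfl⟩ := ih w hwlen hwE
          exact ⟨n + 1, by rw [npow_succ']⟩
    refine ⟨ρ, ?_⟩
    ext u
    simp only [Set.mem_setOf_eq]
    constructor
    · intro huE
      exact hsub u.length u le_rfl huE
    · rintro ⟨n, rfl⟩
      exact hpow n

end StmtThreeAux

/-- If exactly one of `g`, `h` is periodic, then `E(g,h) = α*` for some
word `α`. -/
theorem stmt_3 {σ : Type*} (g h : Ltr → List σ)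
    (hx : Xor' (Periodic g) (Periodic h)) :
    ∃ α : List Ltr, EqSet g h = {u : List Ltr | ∃ n : ℕ, u = npow α n} := by
  rcases hx with ⟨hg, hnh⟩ | ⟨hh, hng⟩
  · obtain ⟨α, hα⟩ := stmt_3_main h g hg hnh
    refine ⟨α, ?_⟩
    rw [← hα]
    ext u
    exact ⟨fun hu => hu.symm, fun hu => hu.symm⟩
  · exact stmt_3_main g h hh hng
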